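/- Let K be the simplicial complex shown in Figure 2 of the paper: a triangulated disk consisting of a central triangle {1,2,3} surrounded by the chordless boundary cycle (4, 8, …, l+3, 5, l+4, …, l+n−1, 6, 7), where vertex 1 is joined to 4,7,6,3,2; vertex 2 is joined to 1,3,4,8,…,l+3,5; vertex 3 is joined to 1,2,5,l+4,…,l+n−1,6. For J₁ = {5,6,7}, J₂ = {2, l+4, …, l+n−1}, J₃ = {3,4}, the full subcomplexes K_{J₁∪J₂} and K_{J₂∪J₃} are connected and acyclic (have vanishing reduced simplicial cohomology), while H̃¹(K_{J₁∪J₂∪J₃}) ≅ ℤ, generated by the class of the cochain χ_{{4,7}}. -/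

import Mathlib

/-- An abstract simplicial complex on vertex type `V` (with the empty face included). -/
structure SC (V : Type) where
  faces : Set (Finset V)
  empty_mem : ∅ ∈ faces
  down_closed : ∀ s ∈ faces, ∀ t ⊆ s, t ∈ faces

variable {V : Type}
/-- The sign `(-1)^{number of elements of J smaller than j}`. -/
def eps [LinearOrder V] (J : Finset V) (j : V) : ℤ :=
  (-1) ^ (J.filter (fun a => a < j)).card
section Cochains
variable [LinearOrder V]
attribute [local instance] Classical.propDecidable

/-- The augmented simplicial cochain group of the full subcomplex `K_J`:
`SCoch K J k` is spanned by the characteristic cochains `χ_L` of the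
`(k-1)`-dimensional simplices `L ∈ K_J` (`k = |L|`; the case `k = 0`, `L = ∅`
gives the augmentation `ℤ` in degree `-1`).  So `SCoch K J (p+1)` are the reduced
`p`-cochains of `K_J`. -/
abbrev SCoch (K : SC V) (J : Finset V) (k : ℕ) : Type :=
  {L : Finset V // L ∈ K.faces ∧ L ⊆ J ∧ L.card = k} →₀ ℤ

/-- The characteristic cochain `χ_L` (or `0` if `L` is not a `(k-1)`-simplex of `K_J`). -/
noncomputable def SCoch.mk (K : SC V) (J : Finset V) (k : ℕ) (L : Finset V) : SCoch K J k :=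
  if h : L ∈ K.faces ∧ L ⊆ J ∧ L.card = k then Finsupp.single ⟨L, h⟩ 1 else 0

/-- The simplicial coboundary map of the (augmented) cochain complex of `K_J`. -/
noncomputable def delta (K : SC V) (J : Finset V) (k : ℕ) (x : SCoch K J k) :
    SCoch K J (k + 1) :=
  x.sum fun L c => ∑ j ∈ J \ L.val, (c * eps L.val j) • SCoch.mk K J (k + 1) (insert j L.val)

end Cochains
/-- The 2-simplices of the triangulated disk of Figure 2: the central triangle
`{1,2,3}` surrounded by the boundary cycle `(4, 8, …, l+3, 5, l+4, …, l+n-1, 6, 7)`,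
with vertex `1` joined to `4,7,6,3,2`, vertex `2` joined to `1,3,4,8,…,l+3,5` and
vertex `3` joined to `1,2,5,l+4,…,l+n-1,6`. -/
def Fig2Tri (l n : ℕ) (t : Finset ℕ) : Prop :=
  t = {1, 2, 3} ∨ t = {1, 2, 4} ∨ t = {1, 4, 7} ∨ t = {1, 6, 7} ∨ t = {1, 3, 6} ∨
  t = {2, 4, 8} ∨ (∃ j, 8 ≤ j ∧ j ≤ l + 2 ∧ t = {2, j, j + 1}) ∨ t = {2, 5, l + 3} ∨
  t = {2, 3, 5} ∨ t = {3, 5, l + 4} ∨ (∃ j, l + 4 ≤ j ∧ j ≤ l + n - 2 ∧ t = {3, j, j + 1}) ∨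
  t = {3, 6, l + n - 1}

/-- The simplicial complex of Figure 2 (a triangulated disk on vertices `1, …, l+n-1`). -/
def Fig2 (l n : ℕ) : SC ℕ where
  faces := {s | ∃ t, Fig2Tri l n t ∧ s ⊆ t}
  empty_mem := ⟨{1, 2, 3}, Or.inl rfl, Finset.empty_subset _⟩
  down_closed := by
    rintro s ⟨t, ht, hst⟩ u hus
    exact ⟨t, ht, hus.trans hst⟩


set_option maxHeartbeats 1000000

attribute [local instance] Classical.propDecidable

namespace Aux13

instance (K : SC ℕ) (J : Finset ℕ) (k : ℕ) :
    Finite {L : Finset ℕ // L ∈ K.faces ∧ L ⊆ J ∧ L.card = k} := by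
  apply Finite.of_injective
    (fun p => (⟨p.1, Finset.mem_powerset.2 p.2.2.1⟩ : {s // s ∈ J.powerset}))
  intro a b hab
  simp only [Subtype.mk.injEq] at hab
  exact Subtype.ext hab

/-- value of a cochain on a finset, `0` if not a valid simplex. -/
noncomputable def cval (K : SC ℕ) (J : Finset ℕ) (k : ℕ) (x : SCoch K J k)
    (L : Finset ℕ) : ℤ :=
  if h : L ∈ K.faces ∧ L ⊆ J ∧ L.card = k then x ⟨L, h⟩ else 0

lemma cval_pos {K : SC ℕ} {J : Finset ℕ} {k : ℕ} (x : SCoch K J k) {L : Finset ℕ}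
    (h : L ∈ K.faces ∧ L ⊆ J ∧ L.card = k) : cval K J k x L = x ⟨L, h⟩ := dif_pos h

lemma cval_zero (K : SC ℕ) (J : Finset ℕ) (k : ℕ) (L : Finset ℕ) :
    cval K J k (0 : SCoch K J k) L = 0 := by
  unfold cval; split <;> simp

lemma cval_add {K : SC ℕ} {J : Finset ℕ} {k : ℕ} (x y : SCoch K J k) (L : Finset ℕ) :
    cval K J k (x + y) L = cval K J k x L + cval K J k y L := by
  unfold cval; split <;> simp

lemma scoch_ext {K : SC ℕ} {J : Finset ℕ} {k : ℕ} {x y : SCoch K J k}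
    (h : ∀ L (_ : L ∈ K.faces ∧ L ⊆ J ∧ L.card = k), cval K J k x L = cval K J k y L) :
    x = y := by
  ext m
  have := h m.1 m.2
  rwa [cval_pos x m.2, cval_pos y m.2] at this

lemma mk_apply (K : SC ℕ) (J : Finset ℕ) (k : ℕ) (L M : Finset ℕ)
    (hM : M ∈ K.faces ∧ M ⊆ J ∧ M.card = k) :
    SCoch.mk K J k L ⟨M, hM⟩ = if L = M then 1 else 0 := by
  unfold SCoch.mk
  split
  · rename_i h
    rw [Finsupp.single_apply]
    congr 1
    simp [Subtype.ext_iff]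
  · rename_i h
    rw [Finsupp.coe_zero, Pi.zero_apply, if_neg]
    intro e; exact h (e ▸ hM)

lemma cval_mk (K : SC ℕ) (J : Finset ℕ) (k : ℕ) (L M : Finset ℕ)
    (hM : M ∈ K.faces ∧ M ⊆ J ∧ M.card = k) :
    cval K J k (SCoch.mk K J k L) M = if L = M then 1 else 0 := by
  rw [cval_pos _ hM, mk_apply]

lemma cval_smul {K : SC ℕ} {J : Finset ℕ} {k : ℕ} (z : ℤ) (x : SCoch K J k) (L : Finset ℕ) :
    cval K J k (z • x) L = z * cval K J k x L := by
  unfold cval; split <;> simp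

lemma delta_def' (K : SC ℕ) (J : Finset ℕ) (k : ℕ) (x : SCoch K J k) :
    delta K J k x
      = x.sum fun L c => ∑ j ∈ J \ L.val,
          (c * eps L.val j) • SCoch.mk K J (k + 1) (insert j L.val) := by
  unfold delta
  congr
  funext L c
  apply Finset.sum_congr (Finset.ext fun a => by simp)
  intro j hj
  exact congrArg _ (congrArg _ (Finset.ext fun a => by simp))

lemma delta_zero (K : SC ℕ) (J : Finset ℕ) (k : ℕ) :
    delta K J k (0 : SCoch K J k) = 0 := by
  rw [delta_def']
  exact Finsupp.sum_zero_index

lemma delta_add (K : SC ℕ) (J : Finset ℕ) (k : ℕ) (x y : SCoch K J k) :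
    delta K J k (x + y) = delta K J k x + delta K J k y := by
  rw [delta_def', delta_def', delta_def']
  apply Finsupp.sum_add_index'
  · intro L; simp
  · intro L c₁ c₂
    rw [← Finset.sum_add_distrib]
    apply Finset.sum_congr rfl
    intro j _
    rw [add_mul, add_smul]

lemma delta_apply (K : SC ℕ) (J : Finset ℕ) (k : ℕ) (x : SCoch K J k) {M : Finset ℕ}
    (hM : M ∈ K.faces ∧ M ⊆ J ∧ M.card = k + 1) :
    cval K J (k+1) (delta K J k x) M
      = ∑ j ∈ M, eps (M.erase j) j * cval K J k x (M.erase j) := by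
  induction x using Finsupp.induction_linear with
  | zero =>
    rw [delta_zero, cval_zero]
    apply Eq.symm
    apply Finset.sum_eq_zero
    intro j _
    rw [cval_zero, mul_zero]
  | add f g hf hg =>
    rw [delta_add, cval_add, hf, hg, ← Finset.sum_add_distrib]
    apply Finset.sum_congr rfl
    intro j _
    rw [cval_add, mul_add]
  | single p c =>
    rw [cval_pos _ hM, delta_def']
    rw [Finsupp.sum_single_index (by simp)]
    rw [Finsupp.finset_sum_apply]
    have hL : ∀ j ∈ M, (M.erase j ∈ K.faces ∧ M.erase j ⊆ J ∧ (M.erase j).card = k) := by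
      intro j hj
      exact ⟨K.down_closed M hM.1 _ (Finset.erase_subset j M),
        (Finset.erase_subset j M).trans hM.2.1,
        by rw [Finset.card_erase_of_mem hj, hM.2.2]; rfl⟩
    refine Eq.trans (Finset.sum_congr rfl (fun j hj =>
      show ((c * eps p.1 j) • SCoch.mk K J (k+1) (insert j p.1)) ⟨M, hM⟩
          = if insert j p.1 = M then c * eps p.1 j else 0 by
        rw [Finsupp.smul_apply, mk_apply, smul_eq_mul, mul_ite, mul_one, mul_zero])) ?_
    refine Eq.trans ?_ (Finset.sum_congr rfl (fun j hj =>
      show eps (M.erase j) j * cval K J k (Finsupp.single p c) (M.erase j)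
          = if p.1 = M.erase j then eps (M.erase j) j * c else 0 by
      rw [cval_pos _ (hL j hj), Finsupp.single_apply]
      by_cases hc : p.1 = M.erase j
      · rw [if_pos (Subtype.ext hc), if_pos hc]
      · rw [if_neg (fun h => hc (congrArg Subtype.val h)), if_neg hc, mul_zero])).symm
    -- now pure sums of ites
    rw [← Finset.sum_subset (s₁ := M \ p.1) (h := Finset.sdiff_subset)
      (hf := by
        intro j hj hj2
        rw [if_neg]
        intro hpe
        have : j ∈ p.1 := by
          simp only [Finset.mem_sdiff] at hj2
          by_contra hjp
          exact hj2 ⟨hj, hjp⟩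
        rw [hpe] at this
        exact Finset.notMem_erase j M this)]
    rw [← Finset.sum_subset (s₁ := M \ p.1)
      (h := by
        intro a ha
        simp only [Finset.mem_sdiff] at ha ⊢
        exact ⟨hM.2.1 ha.1, ha.2⟩)
      (hf := by
        intro j hj hj2
        rw [if_neg]
        intro hins
        simp only [Finset.mem_sdiff] at hj hj2
        exact hj2 ⟨hins ▸ Finset.mem_insert_self j p.1, hj.2⟩)]
    apply Finset.sum_congr rfl
    intro j hj
    simp only [Finset.mem_sdiff] at hj
    have hiff : (insert j p.1 = M) ↔ (p.1 = M.erase j) := by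
      constructor
      · intro h
        rw [← h, Finset.erase_insert hj.2]
      · intro h
        rw [h, Finset.insert_erase hj.1]
    by_cases hc : insert j p.1 = M
    · rw [if_pos hc, if_pos (hiff.1 hc), ← (hiff.1 hc), mul_comm]
    · rw [if_neg hc, if_neg (fun h => hc (hiff.2 h))]

end Aux13
namespace Aux13

lemma eps_empty (j : ℕ) : eps (∅ : Finset ℕ) j = 1 := by
  simp [eps]

lemma eps_single (a j : ℕ) : eps ({a} : Finset ℕ) j = if a < j then -1 else 1 := by
  unfold eps
  rw [Finset.filter_singleton]
  by_cases h : a < j <;> simp [h]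

lemma eps_pair {a b : ℕ} (hab : a ≠ b) (j : ℕ) :
    eps ({a, b} : Finset ℕ) j = (if a < j then (-1 : ℤ) else 1) * (if b < j then -1 else 1) := by
  unfold eps
  rw [Finset.filter_insert, Finset.filter_singleton]
  by_cases h1 : a < j <;> by_cases h2 : b < j <;>
    simp [h1, h2, Finset.card_insert_of_notMem, hab]

lemma erase_pair_left {u w : ℕ} (h : u ≠ w) : ({u, w} : Finset ℕ).erase u = {w} := by
  rw [Finset.erase_insert (by simp [h])]

lemma erase_pair_right {u w : ℕ} (h : u ≠ w) : ({u, w} : Finset ℕ).erase w = {u} := by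
  rw [Finset.erase_insert_of_ne h, Finset.erase_singleton]
  rfl

lemma erase_triple_1 {a b c : ℕ} (h1 : a ≠ b) (h2 : a ≠ c) :
    ({a, b, c} : Finset ℕ).erase a = {b, c} := by
  rw [Finset.erase_insert (by simp [h1, h2])]

lemma erase_triple_2 {a b c : ℕ} (h1 : a ≠ b) (h2 : b ≠ c) :
    ({a, b, c} : Finset ℕ).erase b = {a, c} := by
  rw [Finset.erase_insert_of_ne h1, erase_pair_left h2]

lemma erase_triple_3 {a b c : ℕ} (h1 : a ≠ c) (h2 : b ≠ c) :
    ({a, b, c} : Finset ℕ).erase c = {a, b} := by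
  rw [Finset.erase_insert_of_ne h1, erase_pair_right h2]

lemma cd1 (K : SC ℕ) (J : Finset ℕ) (x : SCoch K J 0) {v : ℕ}
    (h : {v} ∈ K.faces ∧ {v} ⊆ J ∧ ({v} : Finset ℕ).card = 1) :
    cval K J 1 (delta K J 0 x) {v} = cval K J 0 x ∅ := by
  rw [delta_apply K J 0 x h, Finset.sum_singleton, Finset.erase_singleton, eps_empty, one_mul]

lemma cd2 (K : SC ℕ) (J : Finset ℕ) (x : SCoch K J 1) {u w : ℕ} (huw : u < w)
    (h : {u, w} ∈ K.faces ∧ {u, w} ⊆ J ∧ ({u, w} : Finset ℕ).card = 2) :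
    cval K J 2 (delta K J 1 x) {u, w} = cval K J 1 x {w} - cval K J 1 x {u} := by
  have hne : u ≠ w := Nat.ne_of_lt huw
  rw [delta_apply K J 1 x h, Finset.sum_pair hne, erase_pair_left hne, erase_pair_right hne,
    eps_single, eps_single, if_neg (by omega), if_pos huw]
  ring

lemma cd3 (K : SC ℕ) (J : Finset ℕ) (x : SCoch K J 2) {a b c : ℕ}
    (hab : a < b) (hbc : b < c)
    (h : {a, b, c} ∈ K.faces ∧ {a, b, c} ⊆ J ∧ ({a, b, c} : Finset ℕ).card = 3) :
    cval K J 3 (delta K J 2 x) {a, b, c}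
      = cval K J 2 x {b, c} - cval K J 2 x {a, c} + cval K J 2 x {a, b} := by
  have h1 : a ≠ b := Nat.ne_of_lt hab
  have h2 : b ≠ c := Nat.ne_of_lt hbc
  have h3 : a ≠ c := Nat.ne_of_lt (hab.trans hbc)
  rw [delta_apply K J 2 x h]
  rw [Finset.sum_insert (by simp [h1, h3]), Finset.sum_pair h2]
  rw [erase_triple_1 h1 h3, erase_triple_2 h1 h2, erase_triple_3 h3 h2]
  rw [eps_pair h2, eps_pair h3, eps_pair h1]
  rw [if_neg (by omega), if_neg (by omega), if_pos hab, if_neg (by omega),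
    if_pos (hab.trans hbc), if_pos hbc]
  ring

/-- build a cochain from a function on finsets -/
noncomputable def SCochOf (K : SC ℕ) (J : Finset ℕ) (k : ℕ) (g : Finset ℕ → ℤ) :
    SCoch K J k :=
  Finsupp.equivFunOnFinite.symm (fun p => g p.1)

lemma cval_SCochOf (K : SC ℕ) (J : Finset ℕ) (k : ℕ) (g : Finset ℕ → ℤ) {L : Finset ℕ}
    (h : L ∈ K.faces ∧ L ⊆ J ∧ L.card = k) :
    cval K J k (SCochOf K J k g) L = g L := by
  rw [cval_pos _ h]
  exact congrFun (Finsupp.equivFunOnFinite.apply_symm_apply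
    (fun p : {L : Finset ℕ // L ∈ K.faces ∧ L ⊆ J ∧ L.card = k} => g p.1)) ⟨L, h⟩

lemma card3_le (a b c : ℕ) : ({a, b, c} : Finset ℕ).card ≤ 3 :=
  (Finset.card_insert_le _ _).trans (Nat.succ_le_succ ((Finset.card_insert_le _ _).trans
    (by simp)))

lemma pair_cases {L : Finset ℕ} {a b c : ℕ} (hs : L ⊆ {a, b, c}) (h2 : L.card = 2) :
    L = {a, b} ∨ L = {a, c} ∨ L = {b, c} := by
  obtain ⟨x, y, hxy, rfl⟩ := Finset.card_eq_two.1 h2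
  have hx := hs (Finset.mem_insert_self x {y})
  have hy := hs (Finset.mem_insert_of_mem (Finset.mem_singleton_self y))
  simp only [Finset.mem_insert, Finset.mem_singleton] at hx hy
  rcases hx with rfl | rfl | rfl <;> rcases hy with rfl | rfl | rfl <;>
    first
      | exact absurd rfl hxy
      | (left; rfl)
      | (left; exact Finset.pair_comm _ _)
      | (right; left; rfl)
      | (right; left; exact Finset.pair_comm _ _)
      | (right; right; rfl)
      | (right; right; exact Finset.pair_comm _ _)

lemma single_cases {L : Finset ℕ} {a b c : ℕ} (hs : L ⊆ {a, b, c}) (h1 : L.card = 1) :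
    L = {a} ∨ L = {b} ∨ L = {c} := by
  obtain ⟨x, rfl⟩ := Finset.card_eq_one.1 h1
  have hx := hs (Finset.mem_singleton_self x)
  simp only [Finset.mem_insert, Finset.mem_singleton] at hx
  rcases hx with rfl | rfl | rfl
  · left; rfl
  · right; left; rfl
  · right; right; rfl

lemma triple_cases {L : Finset ℕ} {a b c : ℕ} (hs : L ⊆ {a, b, c}) (h3 : L.card = 3) :
    L = {a, b, c} :=
  Finset.eq_of_subset_of_card_le hs (le_trans (card3_le a b c) (le_of_eq h3.symm))

lemma face_card_le_three {l n : ℕ} {L : Finset ℕ} (h : L ∈ (Fig2 l n).faces) :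
    L.card ≤ 3 := by
  obtain ⟨t, ht, hsub⟩ := h
  have := Finset.card_le_card hsub
  unfold Fig2Tri at ht
  rcases ht with rfl | rfl | rfl | rfl | rfl | rfl | ⟨j, _, _, rfl⟩ | rfl | rfl | rfl |
    ⟨j, _, _, rfl⟩ | rfl <;> exact this.trans (card3_le _ _ _)

end Aux13
namespace Aux13

def J12 (l n : ℕ) : Finset ℕ := {5, 6, 7} ∪ insert 2 (Finset.Icc (l + 4) (l + n - 1))
def J23 (l n : ℕ) : Finset ℕ := insert 2 (Finset.Icc (l + 4) (l + n - 1)) ∪ {3, 4}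
def J123 (l n : ℕ) : Finset ℕ :=
  ({5, 6, 7} ∪ insert 2 (Finset.Icc (l + 4) (l + n - 1))) ∪ {3, 4}

lemma mem_J12 {l n x : ℕ} :
    x ∈ J12 l n ↔ x = 5 ∨ x = 6 ∨ x = 7 ∨ x = 2 ∨ (l + 4 ≤ x ∧ x ≤ l + n - 1) := by
  simp only [J12, Finset.mem_union, Finset.mem_insert, Finset.mem_singleton, Finset.mem_Icc]
  tauto

lemma mem_J23 {l n x : ℕ} :
    x ∈ J23 l n ↔ x = 2 ∨ x = 3 ∨ x = 4 ∨ (l + 4 ≤ x ∧ x ≤ l + n - 1) := by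
  simp only [J23, Finset.mem_union, Finset.mem_insert, Finset.mem_singleton, Finset.mem_Icc]
  tauto

lemma mem_J123 {l n x : ℕ} :
    x ∈ J123 l n ↔ x = 2 ∨ x = 3 ∨ x = 4 ∨ x = 5 ∨ x = 6 ∨ x = 7 ∨
      (l + 4 ≤ x ∧ x ≤ l + n - 1) := by
  simp only [J123, Finset.mem_union, Finset.mem_insert, Finset.mem_singleton, Finset.mem_Icc]
  tauto

section Classify
variable {l n : ℕ}

lemma vert12 (hl : 5 ≤ l) (hn : 5 ≤ n) {L : Finset ℕ} (hF : L ∈ (Fig2 l n).faces)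
    (hJ : L ⊆ J12 l n) (hc : L.card = 1) :
    L = {2} ∨ L = {5} ∨ L = {6} ∨ L = {7} ∨
      ∃ j, l + 4 ≤ j ∧ j ≤ l + n - 1 ∧ L = {j} := by
  obtain ⟨t, ht, hsub⟩ := hF
  unfold Fig2Tri at ht
  rcases ht with rfl|rfl|rfl|rfl|rfl|rfl|⟨j,hj1,hj2,rfl⟩|rfl|rfl|rfl|⟨j,hj1,hj2,rfl⟩|rfl <;>
    rcases single_cases hsub hc with rfl|rfl|rfl <;>
      first
        | (exfalso;
           simp only [Finset.insert_subset_iff, Finset.singleton_subset_iff, mem_J12] at hJ;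
           omega)
        | exact Or.inl rfl
        | exact Or.inr (Or.inl rfl)
        | exact Or.inr (Or.inr (Or.inl rfl))
        | exact Or.inr (Or.inr (Or.inr (Or.inl rfl)))
        | exact Or.inr (Or.inr (Or.inr (Or.inr ⟨j, by omega, by omega, rfl⟩)))
        | exact Or.inr (Or.inr (Or.inr (Or.inr ⟨j + 1, by omega, by omega, rfl⟩)))
        | exact Or.inr (Or.inr (Or.inr (Or.inr ⟨l + 4, by omega, by omega, rfl⟩)))
        | exact Or.inr (Or.inr (Or.inr (Or.inr ⟨l + n - 1, by omega, by omega, rfl⟩)))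

lemma edge12 (hl : 5 ≤ l) (hn : 5 ≤ n) {L : Finset ℕ} (hF : L ∈ (Fig2 l n).faces)
    (hJ : L ⊆ J12 l n) (hc : L.card = 2) :
    L = {2, 5} ∨ L = {5, l + 4} ∨ (∃ j, l + 4 ≤ j ∧ j ≤ l + n - 2 ∧ L = {j, j + 1}) ∨
      L = {6, l + n - 1} ∨ L = {6, 7} := by
  obtain ⟨t, ht, hsub⟩ := hF
  unfold Fig2Tri at ht
  rcases ht with rfl|rfl|rfl|rfl|rfl|rfl|⟨j,hj1,hj2,rfl⟩|rfl|rfl|rfl|⟨j,hj1,hj2,rfl⟩|rfl <;>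
    rcases pair_cases hsub hc with rfl|rfl|rfl <;>
      first
        | (exfalso;
           simp only [Finset.insert_subset_iff, Finset.singleton_subset_iff, mem_J12] at hJ;
           omega)
        | exact Or.inl rfl
        | exact Or.inr (Or.inl rfl)
        | exact Or.inr (Or.inr (Or.inl ⟨j, by omega, by omega, rfl⟩))
        | exact Or.inr (Or.inr (Or.inr (Or.inl rfl)))
        | exact Or.inr (Or.inr (Or.inr (Or.inr rfl)))

lemma card12_le (hl : 5 ≤ l) (hn : 5 ≤ n) {L : Finset ℕ} (hF : L ∈ (Fig2 l n).faces)
    (hJ : L ⊆ J12 l n) : L.card ≤ 2 := by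
  rcases Nat.lt_or_ge L.card 3 with h | h
  · omega
  · exfalso
    have h3 : L.card = 3 := le_antisymm (face_card_le_three hF) h
    obtain ⟨t, ht, hsub⟩ := hF
    unfold Fig2Tri at ht
    rcases ht with rfl|rfl|rfl|rfl|rfl|rfl|⟨j,hj1,hj2,rfl⟩|rfl|rfl|rfl|⟨j,hj1,hj2,rfl⟩|rfl <;>
      (rw [triple_cases hsub h3] at hJ;
       simp only [Finset.insert_subset_iff, Finset.singleton_subset_iff, mem_J12] at hJ;
       omega)

lemma vert23 (hl : 5 ≤ l) (hn : 5 ≤ n) {L : Finset ℕ} (hF : L ∈ (Fig2 l n).faces)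
    (hJ : L ⊆ J23 l n) (hc : L.card = 1) :
    L = {2} ∨ L = {3} ∨ L = {4} ∨ ∃ j, l + 4 ≤ j ∧ j ≤ l + n - 1 ∧ L = {j} := by
  obtain ⟨t, ht, hsub⟩ := hF
  unfold Fig2Tri at ht
  rcases ht with rfl|rfl|rfl|rfl|rfl|rfl|⟨j,hj1,hj2,rfl⟩|rfl|rfl|rfl|⟨j,hj1,hj2,rfl⟩|rfl <;>
    rcases single_cases hsub hc with rfl|rfl|rfl <;>
      first
        | (exfalso;
           simp only [Finset.insert_subset_iff, Finset.singleton_subset_iff, mem_J23] at hJ;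
           omega)
        | exact Or.inl rfl
        | exact Or.inr (Or.inl rfl)
        | exact Or.inr (Or.inr (Or.inl rfl))
        | exact Or.inr (Or.inr (Or.inr ⟨j, by omega, by omega, rfl⟩))
        | exact Or.inr (Or.inr (Or.inr ⟨j + 1, by omega, by omega, rfl⟩))
        | exact Or.inr (Or.inr (Or.inr ⟨l + 4, by omega, by omega, rfl⟩))
        | exact Or.inr (Or.inr (Or.inr ⟨l + n - 1, by omega, by omega, rfl⟩))

lemma edge23 (hl : 5 ≤ l) (hn : 5 ≤ n) {L : Finset ℕ} (hF : L ∈ (Fig2 l n).faces)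
    (hJ : L ⊆ J23 l n) (hc : L.card = 2) :
    L = {2, 3} ∨ L = {2, 4} ∨ (∃ j, l + 4 ≤ j ∧ j ≤ l + n - 1 ∧ L = {3, j}) ∨
      (∃ j, l + 4 ≤ j ∧ j ≤ l + n - 2 ∧ L = {j, j + 1}) := by
  obtain ⟨t, ht, hsub⟩ := hF
  unfold Fig2Tri at ht
  rcases ht with rfl|rfl|rfl|rfl|rfl|rfl|⟨j,hj1,hj2,rfl⟩|rfl|rfl|rfl|⟨j,hj1,hj2,rfl⟩|rfl <;>
    rcases pair_cases hsub hc with rfl|rfl|rfl <;>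
      first
        | (exfalso;
           simp only [Finset.insert_subset_iff, Finset.singleton_subset_iff, mem_J23] at hJ;
           omega)
        | exact Or.inl rfl
        | exact Or.inr (Or.inl rfl)
        | exact Or.inr (Or.inr (Or.inl ⟨j, by omega, by omega, rfl⟩))
        | exact Or.inr (Or.inr (Or.inl ⟨j + 1, by omega, by omega, rfl⟩))
        | exact Or.inr (Or.inr (Or.inl ⟨l + 4, by omega, by omega, rfl⟩))
        | exact Or.inr (Or.inr (Or.inl ⟨l + n - 1, by omega, by omega, rfl⟩))
        | exact Or.inr (Or.inr (Or.inr ⟨j, by omega, by omega, rfl⟩))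

lemma tri23 (hl : 5 ≤ l) (hn : 5 ≤ n) {L : Finset ℕ} (hF : L ∈ (Fig2 l n).faces)
    (hJ : L ⊆ J23 l n) (hc : L.card = 3) :
    ∃ j, l + 4 ≤ j ∧ j ≤ l + n - 2 ∧ L = {3, j, j + 1} := by
  obtain ⟨t, ht, hsub⟩ := hF
  unfold Fig2Tri at ht
  rcases ht with rfl|rfl|rfl|rfl|rfl|rfl|⟨j,hj1,hj2,rfl⟩|rfl|rfl|rfl|⟨j,hj1,hj2,rfl⟩|rfl <;>
    rw [triple_cases hsub hc] at hJ ⊢ <;>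
      first
        | (exfalso;
           simp only [Finset.insert_subset_iff, Finset.singleton_subset_iff, mem_J23] at hJ;
           omega)
        | exact ⟨j, by omega, by omega, rfl⟩

lemma edge123 (hl : 5 ≤ l) (hn : 5 ≤ n) {L : Finset ℕ} (hF : L ∈ (Fig2 l n).faces)
    (hJ : L ⊆ J123 l n) (hc : L.card = 2) :
    L = {2, 3} ∨ L = {2, 4} ∨ L = {4, 7} ∨ L = {6, 7} ∨ L = {3, 6} ∨ L = {2, 5} ∨
      L = {3, 5} ∨ (∃ j, l + 4 ≤ j ∧ j ≤ l + n - 1 ∧ L = {3, j}) ∨ L = {5, l + 4} ∨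
      (∃ j, l + 4 ≤ j ∧ j ≤ l + n - 2 ∧ L = {j, j + 1}) ∨ L = {6, l + n - 1} := by
  obtain ⟨t, ht, hsub⟩ := hF
  unfold Fig2Tri at ht
  rcases ht with rfl|rfl|rfl|rfl|rfl|rfl|⟨j,hj1,hj2,rfl⟩|rfl|rfl|rfl|⟨j,hj1,hj2,rfl⟩|rfl <;>
    rcases pair_cases hsub hc with rfl|rfl|rfl <;>
      first
        | (exfalso;
           simp only [Finset.insert_subset_iff, Finset.singleton_subset_iff, mem_J123] at hJ;
           omega)
        | exact Or.inl rfl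
        | exact Or.inr (Or.inl rfl)
        | exact Or.inr (Or.inr (Or.inl rfl))
        | exact Or.inr (Or.inr (Or.inr (Or.inl rfl)))
        | exact Or.inr (Or.inr (Or.inr (Or.inr (Or.inl rfl))))
        | exact Or.inr (Or.inr (Or.inr (Or.inr (Or.inr (Or.inl rfl)))))
        | exact Or.inr (Or.inr (Or.inr (Or.inr (Or.inr (Or.inr (Or.inl rfl))))))
        | exact Or.inr (Or.inr (Or.inr (Or.inr (Or.inr (Or.inr (Or.inr (Or.inl
            ⟨j, by omega, by omega, rfl⟩)))))))
        | exact Or.inr (Or.inr (Or.inr (Or.inr (Or.inr (Or.inr (Or.inr (Or.inl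
            ⟨j + 1, by omega, by omega, rfl⟩)))))))
        | exact Or.inr (Or.inr (Or.inr (Or.inr (Or.inr (Or.inr (Or.inr (Or.inl
            ⟨l + 4, by omega, by omega, rfl⟩)))))))
        | exact Or.inr (Or.inr (Or.inr (Or.inr (Or.inr (Or.inr (Or.inr (Or.inl
            ⟨l + n - 1, by omega, by omega, rfl⟩)))))))
        | exact Or.inr (Or.inr (Or.inr (Or.inr (Or.inr (Or.inr (Or.inr (Or.inr (Or.inl
            rfl))))))))
        | exact Or.inr (Or.inr (Or.inr (Or.inr (Or.inr (Or.inr (Or.inr (Or.inr (Or.inr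
            (Or.inl ⟨j, by omega, by omega, rfl⟩)))))))))
        | exact Or.inr (Or.inr (Or.inr (Or.inr (Or.inr (Or.inr (Or.inr (Or.inr (Or.inr
            (Or.inr rfl)))))))))

lemma tri123 (hl : 5 ≤ l) (hn : 5 ≤ n) {L : Finset ℕ} (hF : L ∈ (Fig2 l n).faces)
    (hJ : L ⊆ J123 l n) (hc : L.card = 3) :
    L = {2, 3, 5} ∨ L = {3, 5, l + 4} ∨ (∃ j, l + 4 ≤ j ∧ j ≤ l + n - 2 ∧ L = {3, j, j + 1}) ∨
      L = {3, 6, l + n - 1} := by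
  obtain ⟨t, ht, hsub⟩ := hF
  unfold Fig2Tri at ht
  rcases ht with rfl|rfl|rfl|rfl|rfl|rfl|⟨j,hj1,hj2,rfl⟩|rfl|rfl|rfl|⟨j,hj1,hj2,rfl⟩|rfl <;>
    rw [triple_cases hsub hc] at hJ ⊢ <;>
      first
        | (exfalso;
           simp only [Finset.insert_subset_iff, Finset.singleton_subset_iff, mem_J123] at hJ;
           omega)
        | exact Or.inl rfl
        | exact Or.inr (Or.inl rfl)
        | exact Or.inr (Or.inr (Or.inl ⟨j, by omega, by omega, rfl⟩))
        | exact Or.inr (Or.inr (Or.inr rfl))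

end Classify
end Aux13
namespace Aux13
variable {l n : ℕ}

lemma ft1 : Fig2Tri l n {1, 2, 3} := Or.inl rfl
lemma ft2 : Fig2Tri l n {1, 2, 4} := Or.inr (Or.inl rfl)
lemma ft3 : Fig2Tri l n {1, 4, 7} := Or.inr (Or.inr (Or.inl rfl))
lemma ft4 : Fig2Tri l n {1, 6, 7} := Or.inr (Or.inr (Or.inr (Or.inl rfl)))
lemma ft5 : Fig2Tri l n {1, 3, 6} := Or.inr (Or.inr (Or.inr (Or.inr (Or.inl rfl))))
lemma ft9 : Fig2Tri l n {2, 3, 5} :=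
  Or.inr (Or.inr (Or.inr (Or.inr (Or.inr (Or.inr (Or.inr (Or.inr (Or.inl rfl))))))))
lemma ft10 : Fig2Tri l n {3, 5, l + 4} :=
  Or.inr (Or.inr (Or.inr (Or.inr (Or.inr (Or.inr (Or.inr (Or.inr (Or.inr (Or.inl rfl)))))))))
lemma ft11 {j : ℕ} (h1 : l + 4 ≤ j) (h2 : j ≤ l + n - 2) : Fig2Tri l n {3, j, j + 1} :=
  Or.inr (Or.inr (Or.inr (Or.inr (Or.inr (Or.inr (Or.inr (Or.inr (Or.inr (Or.inr (Or.inl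
    ⟨j, h1, h2, rfl⟩))))))))))
lemma ft12 : Fig2Tri l n {3, 6, l + n - 1} :=
  Or.inr (Or.inr (Or.inr (Or.inr (Or.inr (Or.inr (Or.inr (Or.inr (Or.inr (Or.inr (Or.inr
    rfl))))))))))

lemma sub_face {K : SC ℕ} {J : Finset ℕ} {k m : ℕ} {L M : Finset ℕ}
    (hL : L ∈ K.faces ∧ L ⊆ J ∧ L.card = k) (h : M ⊆ L) (hcard : M.card = m) :
    M ∈ K.faces ∧ M ⊆ J ∧ M.card = m :=
  ⟨K.down_closed _ hL.1 _ h, h.trans hL.2.1, hcard⟩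

lemma card2' {a b : ℕ} (h : a ≠ b) : ({a, b} : Finset ℕ).card = 2 := Finset.card_pair h

lemma card3' {a b c : ℕ} (h1 : a ≠ b) (h2 : a ≠ c) (h3 : b ≠ c) :
    ({a, b, c} : Finset ℕ).card = 3 := by
  rw [Finset.card_insert_of_notMem (by simp [h1, h2]), card2' h3]

lemma cval_of_card_ne {K : SC ℕ} {J : Finset ℕ} {k : ℕ} (x : SCoch K J k) {L : Finset ℕ}
    (h : L.card ≠ k) : cval K J k x L = 0 :=
  dif_neg (fun hh => h hh.2.2)

lemma face3j (hl : 5 ≤ l) (hn : 5 ≤ n) {j : ℕ} (h1 : l + 4 ≤ j) (h2 : j ≤ l + n - 1) :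
    ({3, j} : Finset ℕ) ∈ (Fig2 l n).faces := by
  rcases Nat.lt_or_ge j (l + n - 1) with h | h
  · exact ⟨{3, j, j + 1}, ft11 h1 (by omega), by intro x hx; simp at hx ⊢; omega⟩
  · have hj : j = l + n - 1 := by omega
    subst hj
    exact ⟨{3, 6, l + n - 1}, ft12, by intro x hx; simp at hx ⊢; omega⟩

end Aux13
namespace Aux13
variable {l n : ℕ}

/-- the "integrated" 0-cochain for the path `2 - 5 - (l+4) - … - (l+n-1) - 6 - 7`. -/
noncomputable def h12 (l n : ℕ) (E : Finset ℕ → ℤ) (v : ℕ) : ℤ :=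
  if v = 2 then 0
  else if v = 5 then E {2, 5}
  else if v = 7 then
    E {2, 5} + E {5, l + 4} + (∑ i ∈ Finset.Ico (l + 4) (l + n - 1), E {i, i + 1})
      - E {6, l + n - 1} + E {6, 7}
  else if v = 6 then
    E {2, 5} + E {5, l + 4} + (∑ i ∈ Finset.Ico (l + 4) (l + n - 1), E {i, i + 1})
      - E {6, l + n - 1}
  else E {2, 5} + E {5, l + 4} + ∑ i ∈ Finset.Ico (l + 4) v, E {i, i + 1}

lemma h12_icc (E : Finset ℕ → ℤ) {v : ℕ} (hl : 5 ≤ l) (hv : l + 4 ≤ v) :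
    h12 l n E v = E {2, 5} + E {5, l + 4} + ∑ i ∈ Finset.Ico (l + 4) v, E {i, i + 1} := by
  unfold h12
  rw [if_neg (by omega), if_neg (by omega), if_neg (by omega), if_neg (by omega)]

lemma part1b (hl : 5 ≤ l) (hn : 5 ≤ n) :
    ∀ c : SCoch (Fig2 l n) (J12 l n) 0, delta (Fig2 l n) (J12 l n) 0 c = 0 → c = 0 := by
  intro c hc
  have h2 : ({2} : Finset ℕ) ∈ (Fig2 l n).faces ∧ {2} ⊆ J12 l n ∧
      ({2} : Finset ℕ).card = 1 :=
    ⟨⟨{1, 2, 3}, ft1, by intro x hx; simp at hx ⊢; omega⟩,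
      by intro x hx; rw [mem_J12]; simp at hx; omega, Finset.card_singleton 2⟩
  have key := cd1 (Fig2 l n) (J12 l n) c h2
  rw [hc, cval_zero] at key
  apply scoch_ext
  intro L hL
  rw [cval_zero]
  obtain rfl := Finset.card_eq_zero.1 hL.2.2
  exact key.symm

lemma part1a0 (hl : 5 ≤ l) (hn : 5 ≤ n)
    (c : SCoch (Fig2 l n) (J12 l n) 1) (hc : delta (Fig2 l n) (J12 l n) 1 c = 0) :
    ∃ b : SCoch (Fig2 l n) (J12 l n) 0, delta (Fig2 l n) (J12 l n) 0 b = c := by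
  have key : ∀ u w : ℕ, u < w → ({u, w} ∈ (Fig2 l n).faces ∧ {u, w} ⊆ J12 l n ∧
      ({u, w} : Finset ℕ).card = 2) →
      cval (Fig2 l n) (J12 l n) 1 c {w} = cval (Fig2 l n) (J12 l n) 1 c {u} := by
    intro u w huw hM
    have := cd2 (Fig2 l n) (J12 l n) c huw hM
    rw [hc, cval_zero] at this
    omega
  have mkt : ∀ (t : Finset ℕ), Fig2Tri l n t → ∀ u w : ℕ, u ≠ w → {u, w} ⊆ t →
      ({u, w} : Finset ℕ) ⊆ J12 l n → ({u, w} ∈ (Fig2 l n).faces ∧ {u, w} ⊆ J12 l n ∧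
      ({u, w} : Finset ℕ).card = 2) :=
    fun t ht u w hne hsub hJ => ⟨⟨t, ht, hsub⟩, hJ, card2' hne⟩
  have e25 := mkt _ ft9 2 5 (by omega) (by intro x hx; simp at hx ⊢; omega)
    (by intro x hx; rw [mem_J12]; simp at hx; omega)
  have e5l := mkt _ ft10 5 (l + 4) (by omega) (by intro x hx; simp at hx ⊢; omega)
    (by intro x hx; rw [mem_J12]; simp at hx; omega)
  have e6N := mkt _ ft12 6 (l + n - 1) (by omega) (by intro x hx; simp at hx ⊢; omega)
    (by intro x hx; rw [mem_J12]; simp at hx; omega)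
  have e67 := mkt _ ft4 6 7 (by omega) (by intro x hx; simp at hx ⊢; omega)
    (by intro x hx; rw [mem_J12]; simp at hx; omega)
  have ejj : ∀ j, l + 4 ≤ j → j ≤ l + n - 2 →
      ({j, j + 1} ∈ (Fig2 l n).faces ∧ {j, j + 1} ⊆ J12 l n ∧
      ({j, j + 1} : Finset ℕ).card = 2) := fun j h1 h2 =>
    mkt _ (ft11 h1 h2) j (j + 1) (by omega) (by intro x hx; simp at hx ⊢; omega)
      (by intro x hx; rw [mem_J12]; simp at hx; omega)
  have c5 : cval (Fig2 l n) (J12 l n) 1 c {5} = cval (Fig2 l n) (J12 l n) 1 c {2} :=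
    key 2 5 (by omega) e25
  have cIcc : ∀ j, l + 4 ≤ j → j ≤ l + n - 1 →
      cval (Fig2 l n) (J12 l n) 1 c {j} = cval (Fig2 l n) (J12 l n) 1 c {2} := by
    intro j hj1
    induction j, hj1 using Nat.le_induction with
    | base => intro _; rw [key 5 (l + 4) (by omega) e5l, c5]
    | succ j hj ih =>
      intro h
      rw [key j (j + 1) (by omega) (ejj j hj (by omega)), ih (by omega)]
  have cN := cIcc (l + n - 1) (by omega) (by omega)
  have c6 : cval (Fig2 l n) (J12 l n) 1 c {6} = cval (Fig2 l n) (J12 l n) 1 c {2} := by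
    rw [← key 6 (l + n - 1) (by omega) e6N, cN]
  have c7 : cval (Fig2 l n) (J12 l n) 1 c {7} = cval (Fig2 l n) (J12 l n) 1 c {2} := by
    rw [key 6 7 (by omega) e67, c6]
  have hemp : (∅ : Finset ℕ) ∈ (Fig2 l n).faces ∧ ∅ ⊆ J12 l n ∧
      (∅ : Finset ℕ).card = 0 :=
    ⟨(Fig2 l n).empty_mem, Finset.empty_subset _, Finset.card_empty⟩
  refine ⟨SCochOf (Fig2 l n) (J12 l n) 0 (fun _ => cval (Fig2 l n) (J12 l n) 1 c {2}),
    scoch_ext ?_⟩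
  intro L hL
  have hL1 : L ∈ (Fig2 l n).faces ∧ L ⊆ J12 l n ∧ L.card = 1 := hL
  rcases vert12 hl hn hL1.1 hL1.2.1 hL1.2.2 with rfl | rfl | rfl | rfl | ⟨j, h1, h2, rfl⟩ <;>
    rw [cd1 (Fig2 l n) (J12 l n) _ hL1, cval_SCochOf (Fig2 l n) (J12 l n) 0 _ hemp]
  · exact c5.symm
  · exact c6.symm
  · exact c7.symm
  · exact (cIcc j h1 h2).symm

lemma part1a1 (hl : 5 ≤ l) (hn : 5 ≤ n)
    (c : SCoch (Fig2 l n) (J12 l n) 2) :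
    ∃ b : SCoch (Fig2 l n) (J12 l n) 1, delta (Fig2 l n) (J12 l n) 1 b = c := by
  refine ⟨SCochOf (Fig2 l n) (J12 l n) 1
    (fun L => ∑ v ∈ L, h12 l n (cval (Fig2 l n) (J12 l n) 2 c) v), scoch_ext ?_⟩
  have hbv : ∀ v : ℕ, ({v} ∈ (Fig2 l n).faces ∧ {v} ⊆ J12 l n ∧
      ({v} : Finset ℕ).card = 1) →
      cval (Fig2 l n) (J12 l n) 1 (SCochOf (Fig2 l n) (J12 l n) 1
        (fun L => ∑ v ∈ L, h12 l n (cval (Fig2 l n) (J12 l n) 2 c) v)) {v}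
        = h12 l n (cval (Fig2 l n) (J12 l n) 2 c) v := by
    intro v h
    rw [cval_SCochOf (Fig2 l n) (J12 l n) 1 _ h, Finset.sum_singleton]
  intro L hL
  have hL1 : L ∈ (Fig2 l n).faces ∧ L ⊆ J12 l n ∧ L.card = 2 := hL
  have subl : ∀ u w : ℕ, ({u} : Finset ℕ) ⊆ {u, w} := by intro u w x hx; simp at hx ⊢; omega
  have subr : ∀ u w : ℕ, ({w} : Finset ℕ) ⊆ {u, w} := by intro u w x hx; simp at hx ⊢; omega
  rcases edge12 hl hn hL1.1 hL1.2.1 hL1.2.2 with rfl | rfl | ⟨j, h1, h2, rfl⟩ | rfl | rfl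
  · rw [cd2 (Fig2 l n) (J12 l n) _ (by omega) hL1,
      hbv 5 (sub_face hL1 (subr 2 5) (Finset.card_singleton _)),
      hbv 2 (sub_face hL1 (subl 2 5) (Finset.card_singleton _))]
    simp [h12]
  · rw [cd2 (Fig2 l n) (J12 l n) _ (by omega) hL1,
      hbv (l + 4) (sub_face hL1 (subr 5 (l + 4)) (Finset.card_singleton _)),
      hbv 5 (sub_face hL1 (subl 5 (l + 4)) (Finset.card_singleton _)),
      h12_icc _ hl (by omega), Finset.Ico_self, Finset.sum_empty]
    simp [h12]
  · rw [cd2 (Fig2 l n) (J12 l n) _ (by omega) hL1,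
      hbv (j + 1) (sub_face hL1 (subr j (j + 1)) (Finset.card_singleton _)),
      hbv j (sub_face hL1 (subl j (j + 1)) (Finset.card_singleton _)),
      h12_icc _ hl (by omega), h12_icc _ hl (by omega),
      Finset.sum_Ico_succ_top (by omega : l + 4 ≤ j)]
    ring
  · rw [cd2 (Fig2 l n) (J12 l n) _ (by omega) hL1,
      hbv (l + n - 1) (sub_face hL1 (subr 6 (l + n - 1)) (Finset.card_singleton _)),
      hbv 6 (sub_face hL1 (subl 6 (l + n - 1)) (Finset.card_singleton _)),
      h12_icc _ hl (by omega)]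
    simp [h12]
    try ring
  · rw [cd2 (Fig2 l n) (J12 l n) _ (by omega) hL1,
      hbv 7 (sub_face hL1 (subr 6 7) (Finset.card_singleton _)),
      hbv 6 (sub_face hL1 (subl 6 7) (Finset.card_singleton _))]
    simp [h12]

lemma part1a (hl : 5 ≤ l) (hn : 5 ≤ n) :
    ∀ k : ℕ, ∀ c : SCoch (Fig2 l n) (J12 l n) (k + 1),
      delta (Fig2 l n) (J12 l n) (k + 1) c = 0 →
      ∃ b : SCoch (Fig2 l n) (J12 l n) k, delta (Fig2 l n) (J12 l n) k b = c := by
  intro k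
  cases k with
  | zero => exact fun c hc => part1a0 hl hn c hc
  | succ k =>
    cases k with
    | zero => exact fun c _ => part1a1 hl hn c
    | succ m =>
      intro c hc
      have hc0 : c = 0 := by
        apply scoch_ext
        intro L hL
        exfalso
        have := card12_le hl hn hL.1 hL.2.1
        omega
      exact ⟨0, by rw [delta_zero, hc0]⟩

end Aux13
namespace Aux13
variable {l n : ℕ}

noncomputable def h23 (E : Finset ℕ → ℤ) (v : ℕ) : ℤ :=
  if v = 2 then 0
  else if v = 3 then E {2, 3}
  else if v = 4 then E {2, 4}
  else E {2, 3} + E {3, v}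

lemma h23_icc (E : Finset ℕ → ℤ) {v : ℕ} (hv : 5 ≤ v) :
    h23 E v = E {2, 3} + E {3, v} := by
  unfold h23
  rw [if_neg (by omega), if_neg (by omega), if_neg (by omega)]

lemma part2b (hl : 5 ≤ l) (hn : 5 ≤ n) :
    ∀ c : SCoch (Fig2 l n) (J23 l n) 0, delta (Fig2 l n) (J23 l n) 0 c = 0 → c = 0 := by
  intro c hc
  have h2 : ({2} : Finset ℕ) ∈ (Fig2 l n).faces ∧ {2} ⊆ J23 l n ∧
      ({2} : Finset ℕ).card = 1 :=
    ⟨⟨{1, 2, 3}, ft1, by intro x hx; simp at hx ⊢; omega⟩,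
      by intro x hx; rw [mem_J23]; simp at hx; omega, Finset.card_singleton 2⟩
  have key := cd1 (Fig2 l n) (J23 l n) c h2
  rw [hc, cval_zero] at key
  apply scoch_ext
  intro L hL
  rw [cval_zero]
  obtain rfl := Finset.card_eq_zero.1 hL.2.2
  exact key.symm

lemma e23_face (hl : 5 ≤ l) (hn : 5 ≤ n) :
    ({2, 3} : Finset ℕ) ∈ (Fig2 l n).faces ∧ {2, 3} ⊆ J23 l n ∧
      ({2, 3} : Finset ℕ).card = 2 :=
  ⟨⟨{1, 2, 3}, ft1, by intro x hx; simp at hx ⊢; omega⟩,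
    by intro x hx; rw [mem_J23]; simp at hx; omega, card2' (by omega)⟩

lemma e24_face (hl : 5 ≤ l) (hn : 5 ≤ n) :
    ({2, 4} : Finset ℕ) ∈ (Fig2 l n).faces ∧ {2, 4} ⊆ J23 l n ∧
      ({2, 4} : Finset ℕ).card = 2 :=
  ⟨⟨{1, 2, 4}, ft2, by intro x hx; simp at hx ⊢; omega⟩,
    by intro x hx; rw [mem_J23]; simp at hx; omega, card2' (by omega)⟩

lemma e3j_face (hl : 5 ≤ l) (hn : 5 ≤ n) {j : ℕ} (h1 : l + 4 ≤ j) (h2 : j ≤ l + n - 1) :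
    ({3, j} : Finset ℕ) ∈ (Fig2 l n).faces ∧ {3, j} ⊆ J23 l n ∧
      ({3, j} : Finset ℕ).card = 2 :=
  ⟨face3j hl hn h1 h2, by intro x hx; rw [mem_J23]; simp at hx; omega, card2' (by omega)⟩

lemma t3jj_face (hl : 5 ≤ l) (hn : 5 ≤ n) {j : ℕ} (h1 : l + 4 ≤ j) (h2 : j ≤ l + n - 2) :
    ({3, j, j + 1} : Finset ℕ) ∈ (Fig2 l n).faces ∧ {3, j, j + 1} ⊆ J23 l n ∧
      ({3, j, j + 1} : Finset ℕ).card = 3 :=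
  ⟨⟨_, ft11 h1 h2, Finset.Subset.refl _⟩,
    by intro x hx; rw [mem_J23]; simp at hx; omega,
    card3' (by omega) (by omega) (by omega)⟩

lemma part2a0 (hl : 5 ≤ l) (hn : 5 ≤ n)
    (c : SCoch (Fig2 l n) (J23 l n) 1) (hc : delta (Fig2 l n) (J23 l n) 1 c = 0) :
    ∃ b : SCoch (Fig2 l n) (J23 l n) 0, delta (Fig2 l n) (J23 l n) 0 b = c := by
  have key : ∀ u w : ℕ, u < w → ({u, w} ∈ (Fig2 l n).faces ∧ {u, w} ⊆ J23 l n ∧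
      ({u, w} : Finset ℕ).card = 2) →
      cval (Fig2 l n) (J23 l n) 1 c {w} = cval (Fig2 l n) (J23 l n) 1 c {u} := by
    intro u w huw hM
    have := cd2 (Fig2 l n) (J23 l n) c huw hM
    rw [hc, cval_zero] at this
    omega
  have c3 := key 2 3 (by omega) (e23_face hl hn)
  have c4 := key 2 4 (by omega) (e24_face hl hn)
  have cIcc : ∀ j, l + 4 ≤ j → j ≤ l + n - 1 →
      cval (Fig2 l n) (J23 l n) 1 c {j} = cval (Fig2 l n) (J23 l n) 1 c {2} := by
    intro j h1 h2
    rw [key 3 j (by omega) (e3j_face hl hn h1 h2), c3]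
  have hemp : (∅ : Finset ℕ) ∈ (Fig2 l n).faces ∧ ∅ ⊆ J23 l n ∧
      (∅ : Finset ℕ).card = 0 :=
    ⟨(Fig2 l n).empty_mem, Finset.empty_subset _, Finset.card_empty⟩
  refine ⟨SCochOf (Fig2 l n) (J23 l n) 0 (fun _ => cval (Fig2 l n) (J23 l n) 1 c {2}),
    scoch_ext ?_⟩
  intro L hL
  have hL1 : L ∈ (Fig2 l n).faces ∧ L ⊆ J23 l n ∧ L.card = 1 := hL
  rcases vert23 hl hn hL1.1 hL1.2.1 hL1.2.2 with rfl | rfl | rfl | ⟨j, h1, h2, rfl⟩ <;>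
    rw [cd1 (Fig2 l n) (J23 l n) _ hL1, cval_SCochOf (Fig2 l n) (J23 l n) 0 _ hemp]
  · exact c3.symm
  · exact c4.symm
  · exact (cIcc j h1 h2).symm

lemma part2a1 (hl : 5 ≤ l) (hn : 5 ≤ n)
    (c : SCoch (Fig2 l n) (J23 l n) 2) (hc : delta (Fig2 l n) (J23 l n) 2 c = 0) :
    ∃ b : SCoch (Fig2 l n) (J23 l n) 1, delta (Fig2 l n) (J23 l n) 1 b = c := by
  have rel : ∀ j, l + 4 ≤ j → j ≤ l + n - 2 →
      cval (Fig2 l n) (J23 l n) 2 c {j, j + 1}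
        - cval (Fig2 l n) (J23 l n) 2 c {3, j + 1}
        + cval (Fig2 l n) (J23 l n) 2 c {3, j} = 0 := by
    intro j h1 h2
    have := cd3 (Fig2 l n) (J23 l n) c (by omega : (3:ℕ) < j) (by omega)
      (t3jj_face hl hn h1 h2)
    rw [hc, cval_zero] at this
    omega
  refine ⟨SCochOf (Fig2 l n) (J23 l n) 1
    (fun L => ∑ v ∈ L, h23 (cval (Fig2 l n) (J23 l n) 2 c) v), scoch_ext ?_⟩
  have hbv : ∀ v : ℕ, ({v} ∈ (Fig2 l n).faces ∧ {v} ⊆ J23 l n ∧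
      ({v} : Finset ℕ).card = 1) →
      cval (Fig2 l n) (J23 l n) 1 (SCochOf (Fig2 l n) (J23 l n) 1
        (fun L => ∑ v ∈ L, h23 (cval (Fig2 l n) (J23 l n) 2 c) v)) {v}
        = h23 (cval (Fig2 l n) (J23 l n) 2 c) v := by
    intro v h
    rw [cval_SCochOf (Fig2 l n) (J23 l n) 1 _ h, Finset.sum_singleton]
  intro L hL
  have hL1 : L ∈ (Fig2 l n).faces ∧ L ⊆ J23 l n ∧ L.card = 2 := hL
  have subl : ∀ u w : ℕ, ({u} : Finset ℕ) ⊆ {u, w} := by intro u w x hx; simp at hx ⊢; omega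
  have subr : ∀ u w : ℕ, ({w} : Finset ℕ) ⊆ {u, w} := by intro u w x hx; simp at hx ⊢; omega
  rcases edge23 hl hn hL1.1 hL1.2.1 hL1.2.2 with rfl | rfl | ⟨j, h1, h2, rfl⟩ | ⟨j, h1, h2, rfl⟩
  · rw [cd2 (Fig2 l n) (J23 l n) _ (by omega) hL1,
      hbv 3 (sub_face hL1 (subr 2 3) (Finset.card_singleton _)),
      hbv 2 (sub_face hL1 (subl 2 3) (Finset.card_singleton _))]
    simp [h23]
  · rw [cd2 (Fig2 l n) (J23 l n) _ (by omega) hL1,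
      hbv 4 (sub_face hL1 (subr 2 4) (Finset.card_singleton _)),
      hbv 2 (sub_face hL1 (subl 2 4) (Finset.card_singleton _))]
    simp [h23]
  · rw [cd2 (Fig2 l n) (J23 l n) _ (by omega) hL1,
      hbv j (sub_face hL1 (subr 3 j) (Finset.card_singleton _)),
      hbv 3 (sub_face hL1 (subl 3 j) (Finset.card_singleton _)),
      h23_icc _ (by omega)]
    simp [h23]
  · rw [cd2 (Fig2 l n) (J23 l n) _ (by omega) hL1,
      hbv (j + 1) (sub_face hL1 (subr j (j + 1)) (Finset.card_singleton _)),
      hbv j (sub_face hL1 (subl j (j + 1)) (Finset.card_singleton _)),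
      h23_icc _ (by omega), h23_icc _ (by omega)]
    have := rel j h1 h2
    linarith

lemma part2a2 (hl : 5 ≤ l) (hn : 5 ≤ n)
    (c : SCoch (Fig2 l n) (J23 l n) 3) :
    ∃ b : SCoch (Fig2 l n) (J23 l n) 2, delta (Fig2 l n) (J23 l n) 2 b = c := by
  refine ⟨SCochOf (Fig2 l n) (J23 l n) 2
    (fun L => cval (Fig2 l n) (J23 l n) 3 c (insert 3 L)), scoch_ext ?_⟩
  intro L hL
  have hL1 : L ∈ (Fig2 l n).faces ∧ L ⊆ J23 l n ∧ L.card = 3 := hL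
  obtain ⟨j, h1, h2, rfl⟩ := tri23 hl hn hL1.1 hL1.2.1 hL1.2.2
  have s1 : ({j, j + 1} : Finset ℕ) ⊆ {3, j, j + 1} := by intro x hx; simp at hx ⊢; omega
  have s2 : ({3, j + 1} : Finset ℕ) ⊆ {3, j, j + 1} := by intro x hx; simp at hx ⊢; omega
  have s3 : ({3, j} : Finset ℕ) ⊆ {3, j, j + 1} := by intro x hx; simp at hx ⊢; omega
  rw [cd3 (Fig2 l n) (J23 l n) _ (by omega : (3:ℕ) < j) (by omega) hL1,
    cval_SCochOf (Fig2 l n) (J23 l n) 2 _ (sub_face hL1 s1 (card2' (by omega))),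
    cval_SCochOf (Fig2 l n) (J23 l n) 2 _ (sub_face hL1 s2 (card2' (by omega))),
    cval_SCochOf (Fig2 l n) (J23 l n) 2 _ (sub_face hL1 s3 (card2' (by omega))),
    Finset.insert_eq_self.2 (by simp : (3:ℕ) ∈ ({3, j + 1} : Finset ℕ)),
    Finset.insert_eq_self.2 (by simp : (3:ℕ) ∈ ({3, j} : Finset ℕ)),
    cval_of_card_ne (L := {3, j + 1}) _ (by rw [card2' (by omega : (3:ℕ) ≠ j + 1)]; omega),
    cval_of_card_ne (L := {3, j}) _ (by rw [card2' (by omega : (3:ℕ) ≠ j)]; omega)]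
  ring

lemma part2a (hl : 5 ≤ l) (hn : 5 ≤ n) :
    ∀ k : ℕ, ∀ c : SCoch (Fig2 l n) (J23 l n) (k + 1),
      delta (Fig2 l n) (J23 l n) (k + 1) c = 0 →
      ∃ b : SCoch (Fig2 l n) (J23 l n) k, delta (Fig2 l n) (J23 l n) k b = c := by
  intro k
  match k with
  | 0 => exact fun c hc => part2a0 hl hn c hc
  | 1 => exact fun c hc => part2a1 hl hn c hc
  | 2 => exact fun c _ => part2a2 hl hn c
  | (m + 3) =>
    intro c hc
    have hc0 : c = 0 := by
      apply scoch_ext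
      intro L hL
      exfalso
      have := face_card_le_three hL.1
      omega
    exact ⟨0, by rw [delta_zero, hc0]⟩

end Aux13
namespace Aux13
variable {l n : ℕ}

noncomputable def h123 (E : Finset ℕ → ℤ) (v : ℕ) : ℤ :=
  if v = 2 then 0
  else if v = 3 then E {2, 3}
  else if v = 4 then E {2, 4}
  else if v = 5 then E {2, 3} + E {3, 5}
  else if v = 6 then E {2, 3} + E {3, 6}
  else if v = 7 then E {2, 3} + E {3, 6} + E {6, 7}
  else E {2, 3} + E {3, v}

lemma h123_icc (E : Finset ℕ → ℤ) {v : ℕ} (hv : 8 ≤ v) :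
    h123 E v = E {2, 3} + E {3, v} := by
  unfold h123
  rw [if_neg (by omega), if_neg (by omega), if_neg (by omega), if_neg (by omega),
    if_neg (by omega), if_neg (by omega)]

lemma ne47 {M : Finset ℕ} (h4 : 4 ∉ M) : ({4, 7} : Finset ℕ) ≠ M :=
  fun h => h4 (h ▸ (by decide : (4:ℕ) ∈ ({4, 7} : Finset ℕ)))

lemma ne47' {M : Finset ℕ} (h7 : 7 ∉ M) : ({4, 7} : Finset ℕ) ≠ M :=
  fun h => h7 (h ▸ (by decide : (7:ℕ) ∈ ({4, 7} : Finset ℕ)))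

lemma mkt123 (hl : 5 ≤ l) (hn : 5 ≤ n) (t : Finset ℕ) (ht : Fig2Tri l n t) (u w : ℕ)
    (hne : u ≠ w) (hsub : ({u, w} : Finset ℕ) ⊆ t) (hJ : ({u, w} : Finset ℕ) ⊆ J123 l n) :
    ({u, w} : Finset ℕ) ∈ (Fig2 l n).faces ∧ {u, w} ⊆ J123 l n ∧
      ({u, w} : Finset ℕ).card = 2 :=
  ⟨⟨t, ht, hsub⟩, hJ, card2' hne⟩

lemma T235 (hl : 5 ≤ l) (hn : 5 ≤ n) :
    ({2, 3, 5} : Finset ℕ) ∈ (Fig2 l n).faces ∧ {2, 3, 5} ⊆ J123 l n ∧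
      ({2, 3, 5} : Finset ℕ).card = 3 :=
  ⟨⟨_, ft9, Finset.Subset.refl _⟩, by intro x hx; rw [mem_J123]; simp at hx; omega,
    card3' (by omega) (by omega) (by omega)⟩

lemma T35l (hl : 5 ≤ l) (hn : 5 ≤ n) :
    ({3, 5, l + 4} : Finset ℕ) ∈ (Fig2 l n).faces ∧ {3, 5, l + 4} ⊆ J123 l n ∧
      ({3, 5, l + 4} : Finset ℕ).card = 3 :=
  ⟨⟨_, ft10, Finset.Subset.refl _⟩, by intro x hx; rw [mem_J123]; simp at hx; omega,
    card3' (by omega) (by omega) (by omega)⟩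

lemma T3jj (hl : 5 ≤ l) (hn : 5 ≤ n) {j : ℕ} (h1 : l + 4 ≤ j) (h2 : j ≤ l + n - 2) :
    ({3, j, j + 1} : Finset ℕ) ∈ (Fig2 l n).faces ∧ {3, j, j + 1} ⊆ J123 l n ∧
      ({3, j, j + 1} : Finset ℕ).card = 3 :=
  ⟨⟨_, ft11 h1 h2, Finset.Subset.refl _⟩, by intro x hx; rw [mem_J123]; simp at hx; omega,
    card3' (by omega) (by omega) (by omega)⟩

lemma T36N (hl : 5 ≤ l) (hn : 5 ≤ n) :
    ({3, 6, l + n - 1} : Finset ℕ) ∈ (Fig2 l n).faces ∧ {3, 6, l + n - 1} ⊆ J123 l n ∧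
      ({3, 6, l + n - 1} : Finset ℕ).card = 3 :=
  ⟨⟨_, ft12, Finset.Subset.refl _⟩, by intro x hx; rw [mem_J123]; simp at hx; omega,
    card3' (by omega) (by omega) (by omega)⟩

lemma part3i (hl : 5 ≤ l) (hn : 5 ≤ n) :
    delta (Fig2 l n) (J123 l n) 2 (SCoch.mk (Fig2 l n) (J123 l n) 2 {4, 7}) = 0 := by
  apply scoch_ext
  intro L hL
  have hL1 : L ∈ (Fig2 l n).faces ∧ L ⊆ J123 l n ∧ L.card = 3 := hL
  rw [cval_zero]
  have sub1 : ∀ a b c : ℕ, ({b, c} : Finset ℕ) ⊆ {a, b, c} := by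
    intro a b c x hx; simp at hx ⊢; omega
  have sub2 : ∀ a b c : ℕ, ({a, c} : Finset ℕ) ⊆ {a, b, c} := by
    intro a b c x hx; simp at hx ⊢; omega
  have sub3 : ∀ a b c : ℕ, ({a, b} : Finset ℕ) ⊆ {a, b, c} := by
    intro a b c x hx; simp at hx ⊢; omega
  rcases tri123 hl hn hL1.1 hL1.2.1 hL1.2.2 with rfl | rfl | ⟨j, h1, h2, rfl⟩ | rfl <;>
    rw [cd3 (Fig2 l n) (J123 l n) _ (by omega) (by omega) hL1,
      cval_mk _ _ _ _ _ (sub_face hL1 (sub1 _ _ _) (card2' (by omega))),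
      cval_mk _ _ _ _ _ (sub_face hL1 (sub2 _ _ _) (card2' (by omega))),
      cval_mk _ _ _ _ _ (sub_face hL1 (sub3 _ _ _) (card2' (by omega))),
      if_neg (ne47 (by simp; try omega)), if_neg (ne47 (by simp; try omega)),
      if_neg (ne47 (by simp; try omega))] <;>
    norm_num

lemma part3ii (hl : 5 ≤ l) (hn : 5 ≤ n)
    (c : SCoch (Fig2 l n) (J123 l n) 2) (hc : delta (Fig2 l n) (J123 l n) 2 c = 0) :
    ∃! z : ℤ, ∃ b : SCoch (Fig2 l n) (J123 l n) 1,
      c = z • SCoch.mk (Fig2 l n) (J123 l n) 2 {4, 7} + delta (Fig2 l n) (J123 l n) 1 b := by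
  have E23t := mkt123 hl hn _ ft1 2 3 (by omega) (by intro x hx; simp at hx ⊢; omega)
    (by intro x hx; rw [mem_J123]; simp at hx; omega)
  have E24t := mkt123 hl hn _ ft2 2 4 (by omega) (by intro x hx; simp at hx ⊢; omega)
    (by intro x hx; rw [mem_J123]; simp at hx; omega)
  have E47t := mkt123 hl hn _ ft3 4 7 (by omega) (by intro x hx; simp at hx ⊢; omega)
    (by intro x hx; rw [mem_J123]; simp at hx; omega)
  have E67t := mkt123 hl hn _ ft4 6 7 (by omega) (by intro x hx; simp at hx ⊢; omega)
    (by intro x hx; rw [mem_J123]; simp at hx; omega)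
  have E36t := mkt123 hl hn _ ft5 3 6 (by omega) (by intro x hx; simp at hx ⊢; omega)
    (by intro x hx; rw [mem_J123]; simp at hx; omega)
  have rel1 : cval (Fig2 l n) (J123 l n) 2 c {3, 5} - cval (Fig2 l n) (J123 l n) 2 c {2, 5}
      + cval (Fig2 l n) (J123 l n) 2 c {2, 3} = 0 := by
    have := cd3 (Fig2 l n) (J123 l n) c (by omega : (2:ℕ) < 3) (by omega) (T235 hl hn)
    rw [hc, cval_zero] at this
    omega
  have rel2 : cval (Fig2 l n) (J123 l n) 2 c {5, l + 4}
      - cval (Fig2 l n) (J123 l n) 2 c {3, l + 4}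
      + cval (Fig2 l n) (J123 l n) 2 c {3, 5} = 0 := by
    have := cd3 (Fig2 l n) (J123 l n) c (by omega : (3:ℕ) < 5) (by omega) (T35l hl hn)
    rw [hc, cval_zero] at this
    omega
  have rel3 : ∀ j, l + 4 ≤ j → j ≤ l + n - 2 →
      cval (Fig2 l n) (J123 l n) 2 c {j, j + 1}
        - cval (Fig2 l n) (J123 l n) 2 c {3, j + 1}
        + cval (Fig2 l n) (J123 l n) 2 c {3, j} = 0 := by
    intro j h1 h2
    have := cd3 (Fig2 l n) (J123 l n) c (by omega : (3:ℕ) < j) (by omega) (T3jj hl hn h1 h2)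
    rw [hc, cval_zero] at this
    omega
  have rel4 : cval (Fig2 l n) (J123 l n) 2 c {6, l + n - 1}
      - cval (Fig2 l n) (J123 l n) 2 c {3, l + n - 1}
      + cval (Fig2 l n) (J123 l n) 2 c {3, 6} = 0 := by
    have := cd3 (Fig2 l n) (J123 l n) c (by omega : (3:ℕ) < 6) (by omega) (T36N hl hn)
    rw [hc, cval_zero] at this
    omega
  refine ⟨cval (Fig2 l n) (J123 l n) 2 c {2, 4} + cval (Fig2 l n) (J123 l n) 2 c {4, 7}
    - cval (Fig2 l n) (J123 l n) 2 c {6, 7} - cval (Fig2 l n) (J123 l n) 2 c {3, 6}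
    - cval (Fig2 l n) (J123 l n) 2 c {2, 3},
    ⟨SCochOf (Fig2 l n) (J123 l n) 1
      (fun L => ∑ v ∈ L, h123 (cval (Fig2 l n) (J123 l n) 2 c) v), ?_⟩, ?_⟩
  · apply scoch_ext
    have hbv : ∀ v : ℕ, ({v} ∈ (Fig2 l n).faces ∧ {v} ⊆ J123 l n ∧
        ({v} : Finset ℕ).card = 1) →
        cval (Fig2 l n) (J123 l n) 1 (SCochOf (Fig2 l n) (J123 l n) 1
          (fun L => ∑ v ∈ L, h123 (cval (Fig2 l n) (J123 l n) 2 c) v)) {v}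
          = h123 (cval (Fig2 l n) (J123 l n) 2 c) v := by
      intro v h
      rw [cval_SCochOf (Fig2 l n) (J123 l n) 1 _ h, Finset.sum_singleton]
    intro L hL
    have hL1 : L ∈ (Fig2 l n).faces ∧ L ⊆ J123 l n ∧ L.card = 2 := hL
    have subl : ∀ u w : ℕ, ({u} : Finset ℕ) ⊆ {u, w} := by
      intro u w x hx; simp at hx ⊢; omega
    have subr : ∀ u w : ℕ, ({w} : Finset ℕ) ⊆ {u, w} := by
      intro u w x hx; simp at hx ⊢; omega
    rcases edge123 hl hn hL1.1 hL1.2.1 hL1.2.2 with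
      rfl | rfl | rfl | rfl | rfl | rfl | rfl | ⟨j, h1, h2, rfl⟩ | rfl | ⟨j, h1, h2, rfl⟩ | rfl
    · rw [cval_add, cval_smul, cval_mk _ _ _ _ _ hL1, if_neg (ne47 (by simp)),
        cd2 (Fig2 l n) (J123 l n) _ (by omega) hL1,
        hbv 3 (sub_face hL1 (subr 2 3) (Finset.card_singleton _)),
        hbv 2 (sub_face hL1 (subl 2 3) (Finset.card_singleton _))]
      simp [h123]
    · rw [cval_add, cval_smul, cval_mk _ _ _ _ _ hL1, if_neg (ne47' (by simp)),
        cd2 (Fig2 l n) (J123 l n) _ (by omega) hL1,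
        hbv 4 (sub_face hL1 (subr 2 4) (Finset.card_singleton _)),
        hbv 2 (sub_face hL1 (subl 2 4) (Finset.card_singleton _))]
      simp [h123]
    · rw [cval_add, cval_smul, cval_mk _ _ _ _ _ hL1, if_pos rfl,
        cd2 (Fig2 l n) (J123 l n) _ (by omega) hL1,
        hbv 7 (sub_face hL1 (subr 4 7) (Finset.card_singleton _)),
        hbv 4 (sub_face hL1 (subl 4 7) (Finset.card_singleton _))]
      simp [h123]
      ring
    · rw [cval_add, cval_smul, cval_mk _ _ _ _ _ hL1, if_neg (ne47 (by simp)),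
        cd2 (Fig2 l n) (J123 l n) _ (by omega) hL1,
        hbv 7 (sub_face hL1 (subr 6 7) (Finset.card_singleton _)),
        hbv 6 (sub_face hL1 (subl 6 7) (Finset.card_singleton _))]
      simp [h123]
    · rw [cval_add, cval_smul, cval_mk _ _ _ _ _ hL1, if_neg (ne47 (by simp)),
        cd2 (Fig2 l n) (J123 l n) _ (by omega) hL1,
        hbv 6 (sub_face hL1 (subr 3 6) (Finset.card_singleton _)),
        hbv 3 (sub_face hL1 (subl 3 6) (Finset.card_singleton _))]
      simp [h123]
    · rw [cval_add, cval_smul, cval_mk _ _ _ _ _ hL1, if_neg (ne47 (by simp)),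
        cd2 (Fig2 l n) (J123 l n) _ (by omega) hL1,
        hbv 5 (sub_face hL1 (subr 2 5) (Finset.card_singleton _)),
        hbv 2 (sub_face hL1 (subl 2 5) (Finset.card_singleton _))]
      simp [h123]
      linarith [rel1]
    · rw [cval_add, cval_smul, cval_mk _ _ _ _ _ hL1, if_neg (ne47 (by simp)),
        cd2 (Fig2 l n) (J123 l n) _ (by omega) hL1,
        hbv 5 (sub_face hL1 (subr 3 5) (Finset.card_singleton _)),
        hbv 3 (sub_face hL1 (subl 3 5) (Finset.card_singleton _))]
      simp [h123]
    · rw [cval_add, cval_smul, cval_mk _ _ _ _ _ hL1, if_neg (ne47 (by simp; omega)),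
        cd2 (Fig2 l n) (J123 l n) _ (by omega) hL1,
        hbv j (sub_face hL1 (subr 3 j) (Finset.card_singleton _)),
        hbv 3 (sub_face hL1 (subl 3 j) (Finset.card_singleton _)),
        h123_icc _ (by omega)]
      simp [h123]
    · rw [cval_add, cval_smul, cval_mk _ _ _ _ _ hL1, if_neg (ne47 (by simp; omega)),
        cd2 (Fig2 l n) (J123 l n) _ (by omega) hL1,
        hbv (l + 4) (sub_face hL1 (subr 5 (l + 4)) (Finset.card_singleton _)),
        hbv 5 (sub_face hL1 (subl 5 (l + 4)) (Finset.card_singleton _)),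
        h123_icc _ (by omega)]
      simp [h123]
      linarith [rel2]
    · rw [cval_add, cval_smul, cval_mk _ _ _ _ _ hL1, if_neg (ne47 (by simp; omega)),
        cd2 (Fig2 l n) (J123 l n) _ (by omega) hL1,
        hbv (j + 1) (sub_face hL1 (subr j (j + 1)) (Finset.card_singleton _)),
        hbv j (sub_face hL1 (subl j (j + 1)) (Finset.card_singleton _)),
        h123_icc _ (by omega), h123_icc _ (by omega)]
      simp
      linarith [rel3 j h1 h2]
    · rw [cval_add, cval_smul, cval_mk _ _ _ _ _ hL1, if_neg (ne47 (by simp; omega)),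
        cd2 (Fig2 l n) (J123 l n) _ (by omega) hL1,
        hbv (l + n - 1) (sub_face hL1 (subr 6 (l + n - 1)) (Finset.card_singleton _)),
        hbv 6 (sub_face hL1 (subl 6 (l + n - 1)) (Finset.card_singleton _)),
        h123_icc _ (by omega)]
      simp [h123]
      linarith [rel4]
  · rintro z' ⟨b', hb'⟩
    have keyu : ∀ u w : ℕ, u < w → (({u, w} : Finset ℕ) ∈ (Fig2 l n).faces ∧
        {u, w} ⊆ J123 l n ∧ ({u, w} : Finset ℕ).card = 2) →
        cval (Fig2 l n) (J123 l n) 2 c {u, w}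
          = z' * (if ({4, 7} : Finset ℕ) = {u, w} then 1 else 0)
            + (cval (Fig2 l n) (J123 l n) 1 b' {w} - cval (Fig2 l n) (J123 l n) 1 b' {u}) := by
      intro u w huw hM
      conv_lhs => rw [hb']
      rw [cval_add, cval_smul, cval_mk _ _ _ _ _ hM,
        cd2 (Fig2 l n) (J123 l n) b' huw hM]
    have q1 := keyu 2 3 (by omega) E23t
    have q2 := keyu 2 4 (by omega) E24t
    have q3 := keyu 4 7 (by omega) E47t
    have q4 := keyu 6 7 (by omega) E67t
    have q5 := keyu 3 6 (by omega) E36t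
    rw [if_neg (ne47 (by simp)), mul_zero] at q1 q4 q5
    rw [if_neg (ne47' (by simp)), mul_zero] at q2
    rw [if_pos rfl, mul_one] at q3
    linarith [q1, q2, q3, q4, q5]

end Aux13

/-- For the complex `K` of Figure 2 and `J₁ = {5,6,7}`, `J₂ = {2, l+4, …, l+n-1}`,
`J₃ = {3,4}`: the full subcomplexes `K_{J₁∪J₂}` and `K_{J₂∪J₃}` are connected and
acyclic (their augmented simplicial cochain complexes are exact), while
`H̃¹(K_{J₁∪J₂∪J₃}) ≅ ℤ`, generated by the class of the cochain `χ_{{4,7}}`. -/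
theorem stmt13 (l n : ℕ) (hl : 5 ≤ l) (hn : 5 ≤ n) :
    let K := Fig2 l n
    let J₁ : Finset ℕ := {5, 6, 7}
    let J₂ : Finset ℕ := insert 2 (Finset.Icc (l + 4) (l + n - 1))
    let J₃ : Finset ℕ := {3, 4}
    ((∀ k : ℕ, ∀ c : SCoch K (J₁ ∪ J₂) (k + 1), delta K (J₁ ∪ J₂) (k + 1) c = 0 →
        ∃ b : SCoch K (J₁ ∪ J₂) k, delta K (J₁ ∪ J₂) k b = c) ∧
      (∀ c : SCoch K (J₁ ∪ J₂) 0, delta K (J₁ ∪ J₂) 0 c = 0 → c = 0)) ∧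
    ((∀ k : ℕ, ∀ c : SCoch K (J₂ ∪ J₃) (k + 1), delta K (J₂ ∪ J₃) (k + 1) c = 0 →
        ∃ b : SCoch K (J₂ ∪ J₃) k, delta K (J₂ ∪ J₃) k b = c) ∧
      (∀ c : SCoch K (J₂ ∪ J₃) 0, delta K (J₂ ∪ J₃) 0 c = 0 → c = 0)) ∧
    (delta K (J₁ ∪ J₂ ∪ J₃) 2 (SCoch.mk K (J₁ ∪ J₂ ∪ J₃) 2 {4, 7}) = 0) ∧
    (∀ c : SCoch K (J₁ ∪ J₂ ∪ J₃) 2, delta K (J₁ ∪ J₂ ∪ J₃) 2 c = 0 →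
      ∃! z : ℤ, ∃ b : SCoch K (J₁ ∪ J₂ ∪ J₃) 1,
        c = z • SCoch.mk K (J₁ ∪ J₂ ∪ J₃) 2 {4, 7} + delta K (J₁ ∪ J₂ ∪ J₃) 1 b) := by
  intro K J₁ J₂ J₃
  exact ⟨⟨Aux13.part1a hl hn, Aux13.part1b hl hn⟩,
    ⟨Aux13.part2a hl hn, Aux13.part2b hl hn⟩,
    Aux13.part3i hl hn,
    fun c hc => Aux13.part3ii hl hn c hc⟩
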